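/- arXiv:2306.12140 — 4 statements merged into one kernel-verified Lean document; each statement's English description precedes it below -/
import Mathlib

section
/- Let C ≥ 1 and let r_{ij} ≥ 0 for i,j ∈ {1,2,3,4} be numbers satisfying r_{ij} ≤ C·r_{ji} and r_{ij} ≤ C·(r_{ik} + r_{kj}) for all i,j,k ∈ {1,2,3,4}. Then r_{12}·r_{34} ≤ 4C⁴·max(r_{13}·r_{24}, r_{14}·r_{23}). -/
lemma quad_aux (C a b p q : ℝ) (hp : 0 ≤ p) (hb : 0 ≤ b)
    (h1 : a ≤ 2*C^2*p) (h2 : b ≤ 2*C^2*q) : a*b ≤ 4*C^4*(p*q) := by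
  nlinarith [mul_le_mul h1 h2 hb (by positivity : (0:ℝ) ≤ 2*C^2*p)]

/-- Quadrilateral inequality for quasi-distances: if `r i j ≤ C * r j i` and
`r i j ≤ C * (r i k + r k j)` for all indices in `{1,2,3,4}` (here `Fin 4`),
then `r 1 2 * r 3 4 ≤ 4 C^4 * max (r 1 3 * r 2 4) (r 1 4 * r 2 3)`. -/
theorem stmt0 (C : ℝ) (hC : 1 ≤ C) (r : Fin 4 → Fin 4 → ℝ)
    (hnonneg : ∀ i j, 0 ≤ r i j)
    (hsym : ∀ i j, r i j ≤ C * r j i)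
    (htri : ∀ i j k, r i j ≤ C * (r i k + r k j)) :
    r 0 1 * r 2 3 ≤ 4 * C ^ 4 * max (r 0 2 * r 1 3) (r 0 3 * r 1 2) := by
  have hC4 : (0:ℝ) ≤ 4*C^4 := by positivity
  have hC0 : (0:ℝ) ≤ C := by linarith
  have hC2 : (0:ℝ) ≤ C^2 := by positivity
  have hCC : C ≤ C^2 := by nlinarith
  -- four cases according to which of r02, r03, r12, r13 is minimal
  have caseA : r 0 2 ≤ r 0 3 → r 0 2 ≤ r 1 2 →
      r 0 1 * r 2 3 ≤ 4 * C ^ 4 * max (r 0 2 * r 1 3) (r 0 3 * r 1 2) := by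
    intro hab hac
    have h1 : r 0 1 ≤ 2*C^2 * r 1 2 := by
      nlinarith [htri 0 1 2, mul_le_mul_of_nonneg_left (hsym 2 1) hC0, mul_le_mul_of_nonneg_left hac hC0, mul_le_mul_of_nonneg_right hCC (hnonneg 1 2)]
    have h2 : r 2 3 ≤ 2*C^2 * r 0 3 := by
      nlinarith [htri 2 3 0, mul_le_mul_of_nonneg_left (hsym 2 0) hC0, mul_le_mul_of_nonneg_left hab hC2, mul_le_mul_of_nonneg_right hCC (hnonneg 0 3)]
    have h3 := quad_aux C _ _ _ _ (hnonneg 1 2) (hnonneg 2 3) h1 h2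
    have h4 : r 1 2 * r 0 3 ≤ max (r 0 2 * r 1 3) (r 0 3 * r 1 2) := by
      rw [mul_comm]; exact le_max_right _ _
    nlinarith [h3, h4]
  have caseB : r 0 3 ≤ r 0 2 → r 0 3 ≤ r 1 3 →
      r 0 1 * r 2 3 ≤ 4 * C ^ 4 * max (r 0 2 * r 1 3) (r 0 3 * r 1 2) := by
    intro hba hbd
    have h1 : r 0 1 ≤ 2*C^2 * r 1 3 := by
      nlinarith [htri 0 1 3, mul_le_mul_of_nonneg_left (hsym 3 1) hC0, mul_le_mul_of_nonneg_left hbd hC0, mul_le_mul_of_nonneg_right hCC (hnonneg 1 3)]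
    have h2 : r 2 3 ≤ 2*C^2 * r 0 2 := by
      nlinarith [htri 2 3 0, mul_le_mul_of_nonneg_left (hsym 2 0) hC0, mul_le_mul_of_nonneg_left hba hC0, mul_le_mul_of_nonneg_right hCC (hnonneg 0 2)]
    have h3 := quad_aux C _ _ _ _ (hnonneg 1 3) (hnonneg 2 3) h1 h2
    have h4 : r 1 3 * r 0 2 ≤ max (r 0 2 * r 1 3) (r 0 3 * r 1 2) := by
      rw [mul_comm]; exact le_max_left _ _
    nlinarith [h3, h4]
  have caseC : r 1 2 ≤ r 0 2 → r 1 2 ≤ r 1 3 →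
      r 0 1 * r 2 3 ≤ 4 * C ^ 4 * max (r 0 2 * r 1 3) (r 0 3 * r 1 2) := by
    intro hca hcd
    have h1 : r 0 1 ≤ 2*C^2 * r 0 2 := by
      nlinarith [htri 0 1 2, mul_le_mul_of_nonneg_left (hsym 2 1) hC0, mul_le_mul_of_nonneg_left hca hC2, mul_le_mul_of_nonneg_right hCC (hnonneg 0 2)]
    have h2 : r 2 3 ≤ 2*C^2 * r 1 3 := by
      nlinarith [htri 2 3 1, mul_le_mul_of_nonneg_left (hsym 2 1) hC0, mul_le_mul_of_nonneg_left hcd hC2, mul_le_mul_of_nonneg_right hCC (hnonneg 1 3)]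
    have h3 := quad_aux C _ _ _ _ (hnonneg 0 2) (hnonneg 2 3) h1 h2
    have h4 : r 0 2 * r 1 3 ≤ max (r 0 2 * r 1 3) (r 0 3 * r 1 2) := le_max_left _ _
    nlinarith [h3, h4]
  have caseD : r 1 3 ≤ r 0 3 → r 1 3 ≤ r 1 2 →
      r 0 1 * r 2 3 ≤ 4 * C ^ 4 * max (r 0 2 * r 1 3) (r 0 3 * r 1 2) := by
    intro hdb hdc
    have h1 : r 0 1 ≤ 2*C^2 * r 0 3 := by
      nlinarith [htri 0 1 3, mul_le_mul_of_nonneg_left (hsym 3 1) hC0, mul_le_mul_of_nonneg_left hdb hC2, mul_le_mul_of_nonneg_right hCC (hnonneg 0 3)]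
    have h2 : r 2 3 ≤ 2*C^2 * r 1 2 := by
      nlinarith [htri 2 3 1, mul_le_mul_of_nonneg_left (hsym 2 1) hC0, mul_le_mul_of_nonneg_left hdc hC0, mul_le_mul_of_nonneg_right hCC (hnonneg 1 2)]
    have h3 := quad_aux C _ _ _ _ (hnonneg 0 3) (hnonneg 2 3) h1 h2
    have h4 : r 0 3 * r 1 2 ≤ max (r 0 2 * r 1 3) (r 0 3 * r 1 2) := le_max_right _ _
    nlinarith [h3, h4]
  rcases le_total (r 0 2) (r 0 3) with hab | hba
  · rcases le_total (r 1 2) (r 1 3) with hcd | hdc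
    · rcases le_total (r 0 2) (r 1 2) with hac | hca
      · exact caseA hab hac
      · exact caseC hca hcd
    · rcases le_total (r 0 2) (r 1 3) with had | hda
      · exact caseA hab (had.trans hdc)
      · exact caseD (hda.trans hab) hdc
  · rcases le_total (r 1 2) (r 1 3) with hcd | hdc
    · rcases le_total (r 0 3) (r 1 2) with hbc | hcb
      · exact caseB hba (hbc.trans hcd)
      · exact caseC (hcb.trans hba) hcd
    · rcases le_total (r 0 3) (r 1 3) with hbd | hdb
      · exact caseB hba hbd
      · exact caseD hdb hdc
end

section
/- Suppose g, d : X × X → ℝ are functions with |g(x,y) − d(x,y)| ≤ C for all x,y, where g(x,y) = 2·log((D(x,y) + max(h(x),h(y)))/√(h(x)h(y))) for some functions D : X × X → [0,∞) and h : X → (0,∞), and D satisfies a quasi-symmetry D(x,y) ≤ C₁ D(y,x) and quasi-triangle inequality D(x,y) ≤ C₁(D(x,z)+D(z,y)). Then d satisfies the four-point condition d(x₁,x₂) + d(x₃,x₄) ≤ max(d(x₁,x₃)+d(x₂,x₄), d(x₁,x₄)+d(x₂,x₃)) + C' for a constant C' depending only on C and C₁. -/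
open Real

private lemma bb_step (A D12 D34 M x y u v : ℝ) (hA : 1 ≤ A)
    (n34 : 0 ≤ D34) (hx : 0 ≤ x) (hy : 0 ≤ y)
    (hq : D12 ≤ A*(x+y)) (hq' : D34 ≤ A*(u+v)) (hs : (x+y)*(u+v) ≤ 4*M) :
    D12*D34 ≤ 4*A^2*M := by
  have hA0 : (0:ℝ) ≤ A := le_trans zero_le_one hA
  have h1 : D12*D34 ≤ (A*(x+y))*(A*(u+v)) :=
    mul_le_mul hq hq' n34 (by positivity)
  nlinarith [mul_nonneg (mul_nonneg hA0 hA0) (sub_nonneg.mpr hs)]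


set_option maxHeartbeats 1000000 in
private lemma bb_T1 (A M D12 D13 D14 D23 D24 D34 : ℝ) (hA : 1 ≤ A)
    (n13 : 0 ≤ D13) (n14 : 0 ≤ D14) (n23 : 0 ≤ D23) (n24 : 0 ≤ D24) (n34 : 0 ≤ D34)
    (hP : D13*D24 ≤ M) (hQ : D14*D23 ≤ M)
    (q1 : D12 ≤ A*(D13+D23)) (q2 : D12 ≤ A*(D14+D24))
    (q3 : D34 ≤ A*(D13+D14)) (q4 : D34 ≤ A*(D23+D24)) :
    D12*D34 ≤ 4*A^2*M := by
  rcases le_total D13 D24 with c1 | c1 <;> rcases le_total D14 D23 with c2 | c2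
  · rcases le_total D24 D23 with c3 | c3
    · refine bb_step A D12 D34 M _ _ _ _ hA n34 n14 n24 q2 q3 ?_
      nlinarith [mul_nonneg n14 n13, mul_nonneg n24 n13, mul_nonneg n24 n14]
    · refine bb_step A D12 D34 M _ _ _ _ hA n34 n13 n23 q1 q3 ?_
      nlinarith [mul_nonneg n13 n13, mul_nonneg n13 n14, mul_nonneg n23 n13]
  · rcases le_total D24 D14 with c3 | c3
    · refine bb_step A D12 D34 M _ _ _ _ hA n34 n13 n23 q1 q4 ?_
      nlinarith [mul_nonneg n13 n23, mul_nonneg n23 n23, mul_nonneg n23 n24]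
    · refine bb_step A D12 D34 M _ _ _ _ hA n34 n13 n23 q1 q3 ?_
      nlinarith [mul_nonneg n13 n13, mul_nonneg n13 n14, mul_nonneg n23 n13]
  · rcases le_total D13 D23 with c3 | c3
    · refine bb_step A D12 D34 M _ _ _ _ hA n34 n14 n24 q2 q3 ?_
      nlinarith [mul_nonneg n14 n13, mul_nonneg n14 n14, mul_nonneg n24 n14]
    · refine bb_step A D12 D34 M _ _ _ _ hA n34 n14 n24 q2 q4 ?_
      nlinarith [mul_nonneg n14 n24, mul_nonneg n24 n23, mul_nonneg n24 n24]
  · rcases le_total D13 D14 with c3 | c3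
    · refine bb_step A D12 D34 M _ _ _ _ hA n34 n13 n23 q1 q4 ?_
      nlinarith [mul_nonneg n13 n23, mul_nonneg n23 n23, mul_nonneg n23 n24]
    · refine bb_step A D12 D34 M _ _ _ _ hA n34 n14 n24 q2 q4 ?_
      nlinarith [mul_nonneg n14 n24, mul_nonneg n24 n23, mul_nonneg n24 n24]

private lemma bb_hterm (A M D x y t : ℝ) (hA0 : 0 ≤ A) (ht : 0 ≤ t)
    (hq : D ≤ A*(x+y)) (e1 : x*t ≤ M) (e2 : y*t ≤ M) : D*t ≤ 2*A*M := by
  have h1 : D*t ≤ A*(x+y)*t := mul_le_mul_of_nonneg_right hq ht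
  nlinarith [mul_le_mul_of_nonneg_left e1 hA0, mul_le_mul_of_nonneg_left e2 hA0]

private lemma bb_final (A M a b c e : ℝ) (hA : 1 ≤ A) (hM : 0 ≤ M)
    (ha : 0 ≤ a) (hb : 0 ≤ b) (hc : 0 ≤ c) (he : 0 ≤ e)
    (h1 : a*c ≤ 4*A^2*M) (h2 : a*e ≤ 2*A*M) (h3 : b*c ≤ 2*A*M) (h4 : b*e ≤ M) :
    (a+b)*(c+e) ≤ 9*A^2*M := by
  have hcoef : (0:ℝ) ≤ 5*A^2 - 4*A - 1 := by nlinarith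
  nlinarith [mul_nonneg hcoef hM]

private lemma bb_mul_key (A h1 h2 h3 h4 D12 D13 D14 D23 D24 D34 : ℝ)
    (hA : 1 ≤ A)
    (ph1 : 0 < h1) (ph2 : 0 < h2) (ph3 : 0 < h3) (ph4 : 0 < h4)
    (n12 : 0 ≤ D12) (n13 : 0 ≤ D13) (n14 : 0 ≤ D14)
    (n23 : 0 ≤ D23) (n24 : 0 ≤ D24) (n34 : 0 ≤ D34)
    (q1 : D12 ≤ A*(D13+D23)) (q2 : D12 ≤ A*(D14+D24))
    (q3 : D34 ≤ A*(D13+D14)) (q4 : D34 ≤ A*(D23+D24)) :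
    (D12 + max h1 h2) * (D34 + max h3 h4) ≤
      9*A^2 * max ((D13 + max h1 h3) * (D24 + max h2 h4))
                  ((D14 + max h1 h4) * (D23 + max h2 h3)) := by
  have hA0 : (0:ℝ) ≤ A := le_trans zero_le_one hA
  set b13 := D13 + max h1 h3 with hb13
  set b14 := D14 + max h1 h4 with hb14
  set b23 := D23 + max h2 h3 with hb23
  set b24 := D24 + max h2 h4 with hb24
  set M := max (b13*b24) (b14*b23) with hM
  have hb13p : 0 < b13 := add_pos_of_nonneg_of_pos n13 (lt_max_iff.mpr (Or.inl ph1))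
  have hb14p : 0 < b14 := add_pos_of_nonneg_of_pos n14 (lt_max_iff.mpr (Or.inl ph1))
  have hb23p : 0 < b23 := add_pos_of_nonneg_of_pos n23 (lt_max_iff.mpr (Or.inl ph2))
  have hb24p : 0 < b24 := add_pos_of_nonneg_of_pos n24 (lt_max_iff.mpr (Or.inl ph2))
  have hMP : b13*b24 ≤ M := le_max_left _ _
  have hMQ : b14*b23 ≤ M := le_max_right _ _
  have hMP' : b24*b13 ≤ M := by rw [mul_comm]; exact hMP
  have hMQ' : b23*b14 ≤ M := by rw [mul_comm]; exact hMQ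
  have hM0 : 0 ≤ M := le_trans (mul_pos hb13p hb24p).le hMP
  have c131 : h1 ≤ b13 := le_trans (le_max_left _ _) (le_add_of_nonneg_left n13)
  have c133 : h3 ≤ b13 := le_trans (le_max_right _ _) (le_add_of_nonneg_left n13)
  have c13D : D13 ≤ b13 := le_add_of_nonneg_right (le_max_iff.mpr (Or.inl ph1.le))
  have c141 : h1 ≤ b14 := le_trans (le_max_left _ _) (le_add_of_nonneg_left n14)
  have c144 : h4 ≤ b14 := le_trans (le_max_right _ _) (le_add_of_nonneg_left n14)
  have c14D : D14 ≤ b14 := le_add_of_nonneg_right (le_max_iff.mpr (Or.inl ph1.le))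
  have c232 : h2 ≤ b23 := le_trans (le_max_left _ _) (le_add_of_nonneg_left n23)
  have c233 : h3 ≤ b23 := le_trans (le_max_right _ _) (le_add_of_nonneg_left n23)
  have c23D : D23 ≤ b23 := le_add_of_nonneg_right (le_max_iff.mpr (Or.inl ph2.le))
  have c242 : h2 ≤ b24 := le_trans (le_max_left _ _) (le_add_of_nonneg_left n24)
  have c244 : h4 ≤ b24 := le_trans (le_max_right _ _) (le_add_of_nonneg_left n24)
  have c24D : D24 ≤ b24 := le_add_of_nonneg_right (le_max_iff.mpr (Or.inl ph2.le))
  have hP : D13*D24 ≤ M := le_trans (mul_le_mul c13D c24D n24 hb13p.le) hMP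
  have hQ : D14*D23 ≤ M := le_trans (mul_le_mul c14D c23D n23 hb14p.le) hMQ
  have T1 : D12*D34 ≤ 4*A^2*M :=
    bb_T1 A M D12 D13 D14 D23 D24 D34 hA n13 n14 n23 n24 n34 hP hQ q1 q2 q3 q4
  have T2 : D12 * max h3 h4 ≤ 2*A*M := by
    rcases le_total h3 h4 with c | c
    · rw [max_eq_right c]
      exact bb_hterm A M D12 D13 D23 h4 hA0 ph4.le q1
        (le_trans (mul_le_mul c13D c244 ph4.le hb13p.le) hMP)
        (le_trans (mul_le_mul c23D c144 ph4.le hb23p.le) hMQ')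
    · rw [max_eq_left c]
      exact bb_hterm A M D12 D14 D24 h3 hA0 ph3.le q2
        (le_trans (mul_le_mul c14D c233 ph3.le hb14p.le) hMQ)
        (le_trans (mul_le_mul c24D c133 ph3.le hb24p.le) hMP')
  have T3 : max h1 h2 * D34 ≤ 2*A*M := by
    rw [mul_comm]
    rcases le_total h1 h2 with c | c
    · rw [max_eq_right c]
      exact bb_hterm A M D34 D13 D14 h2 hA0 ph2.le q3
        (le_trans (mul_le_mul c13D c242 ph2.le hb13p.le) hMP)
        (le_trans (mul_le_mul c14D c232 ph2.le hb14p.le) hMQ)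
    · rw [max_eq_left c]
      exact bb_hterm A M D34 D23 D24 h1 hA0 ph1.le q4
        (le_trans (mul_le_mul c23D c141 ph1.le hb23p.le) hMQ')
        (le_trans (mul_le_mul c24D c131 ph1.le hb24p.le) hMP')
  have T4 : max h1 h2 * max h3 h4 ≤ M := by
    rcases le_total h1 h2 with c | c <;> rcases le_total h3 h4 with c' | c' <;>
      [rw [max_eq_right c, max_eq_right c'];
       rw [max_eq_right c, max_eq_left c'];
       rw [max_eq_left c, max_eq_right c'];
       rw [max_eq_left c, max_eq_left c']]
    · exact le_trans (mul_le_mul c232 c144 ph4.le hb23p.le) hMQ'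
    · exact le_trans (mul_le_mul c242 c133 ph3.le hb24p.le) hMP'
    · exact le_trans (mul_le_mul c131 c244 ph4.le hb13p.le) hMP
    · exact le_trans (mul_le_mul c141 c233 ph3.le hb14p.le) hMQ
  exact bb_final A M D12 (max h1 h2) D34 (max h3 h4) hA hM0 n12
    (le_trans ph1.le (le_max_left _ _)) n34 (le_trans ph3.le (le_max_left _ _)) T1 T2 T3 T4

/-- Abstract Balogh–Bonk argument: if a distance function `d` is uniformly (additively) close to
`g(x,y) = 2 log((D(x,y) + max(h x, h y))/√(h x · h y))`, where `D` is a quasi-pseudodistance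
with constant `C₁` and `h > 0`, then `d` satisfies the four-point Gromov hyperbolicity
condition with a constant `C'` depending only on `C` and `C₁`. -/
theorem stmt7 (C C₁ : ℝ) (hC : 0 ≤ C) (hC₁ : 1 ≤ C₁) :
    ∃ C' : ℝ, ∀ (X : Type) (d D : X → X → ℝ) (h : X → ℝ),
      (∀ x, 0 < h x) →
      (∀ x y, 0 ≤ D x y) →
      (∀ x y, D x y ≤ C₁ * D y x) →
      (∀ x y z, D x y ≤ C₁ * (D x z + D z y)) →
      (∀ x y,
        |2 * Real.log ((D x y + max (h x) (h y)) / Real.sqrt (h x * h y)) - d x y| ≤ C) →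
      ∀ x₁ x₂ x₃ x₄ : X,
        d x₁ x₂ + d x₃ x₄ ≤ max (d x₁ x₃ + d x₂ x₄) (d x₁ x₄ + d x₂ x₃) + C' := by
  refine ⟨4*C + 2*Real.log (9*C₁^4), ?_⟩
  intro X d D h hpos hDnn hsym htri hclose x₁ x₂ x₃ x₄
  have hC₁0 : (0:ℝ) < C₁ := lt_of_lt_of_le one_pos hC₁
  have hA1 : (1:ℝ) ≤ C₁^2 := by nlinarith
  -- quasi-triangle consequences
  have q1 : D x₁ x₂ ≤ C₁^2*(D x₁ x₃ + D x₂ x₃) := by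
    have t := htri x₁ x₂ x₃
    have s := hsym x₃ x₂
    nlinarith [mul_le_mul_of_nonneg_left s hC₁0.le,
      mul_nonneg (mul_nonneg hC₁0.le (sub_nonneg.2 hC₁)) (hDnn x₁ x₃)]
  have q2 : D x₁ x₂ ≤ C₁^2*(D x₁ x₄ + D x₂ x₄) := by
    have t := htri x₁ x₂ x₄
    have s := hsym x₄ x₂
    nlinarith [mul_le_mul_of_nonneg_left s hC₁0.le,
      mul_nonneg (mul_nonneg hC₁0.le (sub_nonneg.2 hC₁)) (hDnn x₁ x₄)]
  have q3 : D x₃ x₄ ≤ C₁^2*(D x₁ x₃ + D x₁ x₄) := by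
    have t := htri x₃ x₄ x₁
    have s := hsym x₃ x₁
    nlinarith [mul_le_mul_of_nonneg_left s hC₁0.le,
      mul_nonneg (mul_nonneg hC₁0.le (sub_nonneg.2 hC₁)) (hDnn x₁ x₄)]
  have q4 : D x₃ x₄ ≤ C₁^2*(D x₂ x₃ + D x₂ x₄) := by
    have t := htri x₃ x₄ x₂
    have s := hsym x₃ x₂
    nlinarith [mul_le_mul_of_nonneg_left s hC₁0.le,
      mul_nonneg (mul_nonneg hC₁0.le (sub_nonneg.2 hC₁)) (hDnn x₂ x₄)]
  set b12 := D x₁ x₂ + max (h x₁) (h x₂) with hb12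
  set b13 := D x₁ x₃ + max (h x₁) (h x₃) with hb13
  set b14 := D x₁ x₄ + max (h x₁) (h x₄) with hb14
  set b23 := D x₂ x₃ + max (h x₂) (h x₃) with hb23
  set b24 := D x₂ x₄ + max (h x₂) (h x₄) with hb24
  set b34 := D x₃ x₄ + max (h x₃) (h x₄) with hb34
  have hbp : ∀ x y : X, 0 < D x y + max (h x) (h y) := fun x y =>
    add_pos_of_nonneg_of_pos (hDnn x y) (lt_max_iff.mpr (Or.inl (hpos x)))
  have mult : b12*b34 ≤ 9*(C₁^2)^2 * max (b13*b24) (b14*b23) :=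
    bb_mul_key (C₁^2) (h x₁) (h x₂) (h x₃) (h x₄) _ _ _ _ _ _ hA1
      (hpos x₁) (hpos x₂) (hpos x₃) (hpos x₄)
      (hDnn _ _) (hDnn _ _) (hDnn _ _) (hDnn _ _) (hDnn _ _) (hDnn _ _)
      q1 q2 q3 q4
  -- log expansion of g
  have gexp : ∀ x y : X,
      2 * Real.log ((D x y + max (h x) (h y)) / Real.sqrt (h x * h y)) =
        2 * Real.log (D x y + max (h x) (h y)) - (Real.log (h x) + Real.log (h y)) := by
    intro x y
    have hx := hpos x
    have hy := hpos y
    rw [Real.log_div (hbp x y).ne' (Real.sqrt_ne_zero'.mpr (mul_pos hx hy)),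
      Real.log_sqrt (mul_pos hx hy).le, Real.log_mul hx.ne' hy.ne']
    ring
  have habs : ∀ x y : X,
      d x y ≤ 2 * Real.log (D x y + max (h x) (h y)) - (Real.log (h x) + Real.log (h y)) + C ∧
      2 * Real.log (D x y + max (h x) (h y)) - (Real.log (h x) + Real.log (h y)) - C ≤ d x y := by
    intro x y
    have := abs_le.mp (hclose x y)
    rw [gexp x y] at this
    exact ⟨by linarith [this.2], by linarith [this.1]⟩
  have h9A : (0:ℝ) < 9*(C₁^2)^2 := by positivity
  have hlog9 : Real.log (9*(C₁^2)^2) = Real.log (9*C₁^4) := by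
    norm_num [← pow_mul]
  rcases le_total (b13*b24) (b14*b23) with hc | hc
  · -- max is b14*b23
    have hml : b12*b34 ≤ 9*(C₁^2)^2*(b14*b23) := by
      rwa [max_eq_right hc] at mult
    have hlog : Real.log b12 + Real.log b34 ≤
        Real.log (9*C₁^4) + (Real.log b14 + Real.log b23) := by
      have := Real.log_le_log (mul_pos (hbp x₁ x₂) (hbp x₃ x₄)) hml
      rwa [Real.log_mul (hbp x₁ x₂).ne' (hbp x₃ x₄).ne',
        Real.log_mul h9A.ne' (mul_pos (hbp x₁ x₄) (hbp x₂ x₃)).ne',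
        Real.log_mul (hbp x₁ x₄).ne' (hbp x₂ x₃).ne', hlog9] at this
    have e12 := (habs x₁ x₂).1
    have e34 := (habs x₃ x₄).1
    have f14 := (habs x₁ x₄).2
    have f23 := (habs x₂ x₃).2
    have : d x₁ x₂ + d x₃ x₄ ≤ (d x₁ x₄ + d x₂ x₃) + (4*C + 2*Real.log (9*C₁^4)) := by
      simp only [← hb12, ← hb34, ← hb14, ← hb23] at e12 e34 f14 f23
      linarith
    exact this.trans (add_le_add_left (le_max_right _ _) _)
  · -- max is b13*b24
    have hml : b12*b34 ≤ 9*(C₁^2)^2*(b13*b24) := by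
      rwa [max_eq_left hc] at mult
    have hlog : Real.log b12 + Real.log b34 ≤
        Real.log (9*C₁^4) + (Real.log b13 + Real.log b24) := by
      have := Real.log_le_log (mul_pos (hbp x₁ x₂) (hbp x₃ x₄)) hml
      rwa [Real.log_mul (hbp x₁ x₂).ne' (hbp x₃ x₄).ne',
        Real.log_mul h9A.ne' (mul_pos (hbp x₁ x₃) (hbp x₂ x₄)).ne',
        Real.log_mul (hbp x₁ x₃).ne' (hbp x₂ x₄).ne', hlog9] at this
    have e12 := (habs x₁ x₂).1
    have e34 := (habs x₃ x₄).1
    have f13 := (habs x₁ x₃).2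
    have f24 := (habs x₂ x₄).2
    have : d x₁ x₂ + d x₃ x₄ ≤ (d x₁ x₃ + d x₂ x₄) + (4*C + 2*Real.log (9*C₁^4)) := by
      simp only [← hb12, ← hb34, ← hb13, ← hb24] at e12 e34 f13 f24
      linarith
    exact this.trans (add_le_add_left (le_max_left _ _) _)
end

section
/- Let D : X × X → [0,∞) satisfy D(x,y) = 0 iff x = y, D(y,x) ≤ C·D(x,y), and D(x,y) ≤ C·(D(x,z) + D(z,y)) for some C ≥ 1. Then for sufficiently small ε > 0 the function ρ(x,y) = D(x,y)^ε + D(y,x)^ε is comparable to a genuine metric on X: there exists a metric d₀ on X and a constant A ≥ 1 with A^{-1}·ρ ≤ d₀ ≤ ρ. -/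
namespace Stmt11Aux

variable {X : Type*}

/-- Sum of `σ` along the chain `x, l₀, l₁, …, y`. -/
def csum (σ : X → X → ℝ) : X → List X → X → ℝ
  | x, [], y => σ x y
  | x, z :: l, y => σ x z + csum σ z l y

lemma csum_nil (σ : X → X → ℝ) (x y : X) : csum σ x [] y = σ x y := rfl

lemma csum_cons (σ : X → X → ℝ) (x z y : X) (l : List X) :
    csum σ x (z :: l) y = σ x z + csum σ z l y := rfl

lemma csum_nonneg (σ : X → X → ℝ) (hnn : ∀ a b, 0 ≤ σ a b) :
    ∀ (l : List X) (x y : X), 0 ≤ csum σ x l y := by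
  intro l
  induction l with
  | nil => intro x y; exact hnn x y
  | cons z t ih => intro x y; have := ih z y; have := hnn x z; simp [csum_cons]; linarith

lemma csum_append (σ : X → X → ℝ) :
    ∀ (l₁ : List X) (x z y : X) (l₂ : List X),
      csum σ x (l₁ ++ z :: l₂) y = csum σ x l₁ z + csum σ z l₂ y := by
  intro l₁
  induction l₁ with
  | nil => intro x z y l₂; simp [csum_nil, csum_cons]
  | cons w t ih => intro x z y l₂; simp [csum_cons, ih w z y l₂]; ring

lemma csum_append_singleton (σ : X → X → ℝ) :
    ∀ (m : List X) (a b c : X), csum σ a (m ++ [b]) c = csum σ a m b + σ b c := by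
  intro m
  induction m with
  | nil => intro a b c; simp [csum_nil, csum_cons]
  | cons w t ih => intro a b c; simp [csum_cons, ih w b c]; ring

lemma csum_reverse (σ : X → X → ℝ) (hs : ∀ a b, σ a b = σ b a) :
    ∀ (l : List X) (x y : X), csum σ x l y = csum σ y l.reverse x := by
  intro l
  induction l with
  | nil => intro x y; simp [csum_nil, hs x y]
  | cons z t ih =>
      intro x y
      simp only [csum_cons, List.reverse_cons]
      rw [csum_append_singleton, ← ih z y, hs z x]
      ring

lemma csum_eq_sum (σ : X → X → ℝ) :
    ∀ (l : List X) (x y : X),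
      csum σ x l y = ∑ i ∈ Finset.range (l.length + 1),
        σ ((x :: l).getD i y) ((x :: l).getD (i + 1) y) := by
  intro l
  induction l with
  | nil => intro x y; simp [csum_nil]
  | cons z t ih =>
      intro x y
      rw [csum_cons, ih z y]
      have := Finset.sum_range_succ'
        (fun i => σ (((x :: z :: t)).getD i y) (((x :: z :: t)).getD (i + 1) y)) (t.length + 1)
      simp only [List.length_cons]
      rw [this]
      simp only [List.getD_cons_succ, List.getD_cons_zero]
      ring

/-- The Frink chain lemma: if `σ ≤ √2 · max`, then the distance between the endpoints
of any chain is at most twice the chain sum. -/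
lemma frink_chain (σ : X → X → ℝ) (hnn : ∀ a b, 0 ≤ σ a b) (h0 : ∀ a, σ a a = 0)
    (hK : ∀ x y z, σ x z ≤ Real.sqrt 2 * max (σ x y) (σ y z)) :
    ∀ (n : ℕ) (f : ℕ → X),
      σ (f 0) (f n) ≤ 2 * ∑ i ∈ Finset.range n, σ (f i) (f (i + 1)) := by
  intro n
  induction n using Nat.strong_induction_on with
  | _ n ih =>
    match n with
    | 0 => intro f; simp [h0]
    | (m + 1) =>
      intro f
      classical
      set S : ℝ := ∑ i ∈ Finset.range (m + 1), σ (f i) (f (i + 1)) with hSdef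
      have hS : 0 ≤ S := Finset.sum_nonneg fun i _ => hnn _ _
      set P : ℕ → Prop := fun k => ∑ i ∈ Finset.range k, σ (f i) (f (i + 1)) ≤ S / 2 with hPdef
      set k : ℕ := Nat.findGreatest P m with hkdef
      have hk_le : k ≤ m := Nat.findGreatest_le m
      have hP0 : P 0 := by simp [hPdef]; linarith
      have hPk : P k := Nat.findGreatest_spec (Nat.zero_le m) hP0
      have hsqrt2 : Real.sqrt 2 * Real.sqrt 2 = 2 := Real.mul_self_sqrt (by norm_num)
      have h12 : 1 ≤ Real.sqrt 2 := by nlinarith [Real.sqrt_nonneg 2]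
      -- prefix bound
      have h1 : σ (f 0) (f k) ≤ S := by
        have := ih k (lt_of_le_of_lt hk_le (Nat.lt_succ_self m)) f
        have hk2 : (2:ℝ) * ∑ i ∈ Finset.range k, σ (f i) (f (i + 1)) ≤ 2 * (S / 2) := by
          have := hPk; simp only [hPdef] at this; linarith
        linarith
      -- tail sum bound
      have hT : ∑ i ∈ Finset.Ico (k + 1) (m + 1), σ (f i) (f (i + 1)) ≤ S / 2 := by
        rcases eq_or_lt_of_le hk_le with h | h
        · rw [h]; simp; linarith
        · have hnot : ¬ P (k + 1) :=
            Nat.findGreatest_is_greatest (Nat.lt_succ_self k) (by omega)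
          have hgt : S / 2 < ∑ i ∈ Finset.range (k + 1), σ (f i) (f (i + 1)) := by
            simp only [hPdef] at hnot; linarith [not_le.mp hnot]
          have hsplit : (∑ i ∈ Finset.range (k + 1), σ (f i) (f (i + 1)))
              + ∑ i ∈ Finset.Ico (k + 1) (m + 1), σ (f i) (f (i + 1)) = S := by
            rw [hSdef, Finset.range_eq_Ico, Finset.range_eq_Ico]
            exact Finset.sum_Ico_consecutive (fun i => σ (f i) (f (i + 1))) (m := 0) (n := k + 1) (k := m + 1) (Nat.zero_le _) (by omega)
          linarith
      -- suffix bound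
      have h2 : σ (f (k + 1)) (f (m + 1)) ≤ S := by
        have hlen : m + 1 - (k + 1) < m + 1 := by omega
        have hih := ih (m + 1 - (k + 1)) hlen (fun i => f (k + 1 + i))
        have hend : k + 1 + (m + 1 - (k + 1)) = m + 1 := by omega
        have hsum : ∑ i ∈ Finset.range (m + 1 - (k + 1)), σ (f (k + 1 + i)) (f (k + 1 + (i + 1)))
            = ∑ i ∈ Finset.Ico (k + 1) (m + 1), σ (f i) (f (i + 1)) := by
          rw [Finset.sum_Ico_eq_sum_range]
          apply Finset.sum_congr rfl
          intro i _
          have hx : k + 1 + (i + 1) = k + 1 + i + 1 := by omega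
          rw [hx]
        simp only [Nat.add_zero] at hih
        rw [hsum, hend] at hih
        linarith
      -- middle single term
      have hmid : σ (f k) (f (k + 1)) ≤ S := by
        rw [hSdef]
        exact Finset.single_le_sum (f := fun i => σ (f i) (f (i + 1))) (fun i _ => hnn _ _) (Finset.mem_range.mpr (Nat.lt_succ_of_le hk_le))
      -- combine
      have hA : σ (f k) (f (m + 1)) ≤ Real.sqrt 2 * S := by
        have hk1 := hK (f k) (f (k + 1)) (f (m + 1))
        have hmax : max (σ (f k) (f (k + 1))) (σ (f (k + 1)) (f (m + 1))) ≤ S := max_le hmid h2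
        calc σ (f k) (f (m + 1)) ≤ Real.sqrt 2 * max (σ (f k) (f (k + 1))) (σ (f (k + 1)) (f (m + 1))) := hk1
          _ ≤ Real.sqrt 2 * S := mul_le_mul_of_nonneg_left hmax (Real.sqrt_nonneg 2)
      have hB : max (σ (f 0) (f k)) (σ (f k) (f (m + 1))) ≤ Real.sqrt 2 * S := by
        apply max_le _ hA
        calc σ (f 0) (f k) ≤ S := h1
          _ ≤ Real.sqrt 2 * S := le_mul_of_one_le_left hS h12
      calc σ (f 0) (f (m + 1))
          ≤ Real.sqrt 2 * max (σ (f 0) (f k)) (σ (f k) (f (m + 1))) := hK _ _ _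
        _ ≤ Real.sqrt 2 * (Real.sqrt 2 * S) := mul_le_mul_of_nonneg_left hB (Real.sqrt_nonneg 2)
        _ = 2 * S := by rw [← mul_assoc, hsqrt2]

lemma frink_csum (σ : X → X → ℝ) (hnn : ∀ a b, 0 ≤ σ a b) (h0 : ∀ a, σ a a = 0)
    (hK : ∀ x y z, σ x z ≤ Real.sqrt 2 * max (σ x y) (σ y z))
    (x y : X) (l : List X) : σ x y ≤ 2 * csum σ x l y := by
  have h := frink_chain σ hnn h0 hK (l.length + 1) (fun i => (x :: l).getD i y)
  have h0' : (x :: l).getD 0 y = x := rfl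
  have hn : (x :: l).getD (l.length + 1) y = y := by
    apply List.getD_eq_default
    simp
  rw [csum_eq_sum]
  simp only [h0', hn] at h
  exact h

noncomputable def dzero (σ : X → X → ℝ) (x y : X) : ℝ :=
  sInf {s | ∃ l : List X, csum σ x l y = s}

lemma dzero_set_nonempty (σ : X → X → ℝ) (x y : X) :
    Set.Nonempty {s | ∃ l : List X, csum σ x l y = s} := ⟨σ x y, [], rfl⟩

lemma dzero_set_bddBelow (σ : X → X → ℝ) (hnn : ∀ a b, 0 ≤ σ a b) (x y : X) :
    BddBelow {s | ∃ l : List X, csum σ x l y = s} := by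
  refine ⟨0, ?_⟩
  rintro s ⟨l, rfl⟩
  exact csum_nonneg σ hnn l x y

lemma dzero_nonneg (σ : X → X → ℝ) (hnn : ∀ a b, 0 ≤ σ a b) (x y : X) :
    0 ≤ dzero σ x y := by
  apply Real.sInf_nonneg
  rintro s ⟨l, rfl⟩
  exact csum_nonneg σ hnn l x y

lemma dzero_le (σ : X → X → ℝ) (hnn : ∀ a b, 0 ≤ σ a b) (x y : X) :
    dzero σ x y ≤ σ x y :=
  csInf_le (dzero_set_bddBelow σ hnn x y) ⟨[], rfl⟩

lemma le_dzero (σ : X → X → ℝ) (hnn : ∀ a b, 0 ≤ σ a b) (h0 : ∀ a, σ a a = 0)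
    (hK : ∀ x y z, σ x z ≤ Real.sqrt 2 * max (σ x y) (σ y z)) (x y : X) :
    σ x y ≤ 2 * dzero σ x y := by
  have : σ x y / 2 ≤ dzero σ x y := by
    apply le_csInf (dzero_set_nonempty σ x y)
    rintro s ⟨l, rfl⟩
    linarith [frink_csum σ hnn h0 hK x y l]
  linarith

lemma dzero_symm (σ : X → X → ℝ) (hs : ∀ a b, σ a b = σ b a) (x y : X) :
    dzero σ x y = dzero σ y x := by
  unfold dzero
  congr 1
  ext s
  constructor
  · rintro ⟨l, rfl⟩
    exact ⟨l.reverse, (csum_reverse σ hs l x y).symm⟩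
  · rintro ⟨l, rfl⟩
    exact ⟨l.reverse, (csum_reverse σ hs l y x).symm⟩

lemma dzero_le_csum (σ : X → X → ℝ) (hnn : ∀ a b, 0 ≤ σ a b) (x y : X) (l : List X) :
    dzero σ x y ≤ csum σ x l y :=
  csInf_le (dzero_set_bddBelow σ hnn x y) ⟨l, rfl⟩

lemma forall_le_dzero (σ : X → X → ℝ) (x y : X) (a : ℝ)
    (h : ∀ l : List X, a ≤ csum σ x l y) : a ≤ dzero σ x y :=
  le_csInf (dzero_set_nonempty σ x y) (by rintro s ⟨l, rfl⟩; exact h l)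

lemma dzero_triangle (σ : X → X → ℝ) (hnn : ∀ a b, 0 ≤ σ a b) (x z y : X) :
    dzero σ x y ≤ dzero σ x z + dzero σ z y := by
  have key : ∀ l₂ : List X, dzero σ x y - csum σ z l₂ y ≤ dzero σ x z := by
    intro l₂
    apply forall_le_dzero
    intro l₁
    have := dzero_le_csum σ hnn x y (l₁ ++ z :: l₂)
    rw [csum_append] at this
    linarith
  have key2 : dzero σ x y - dzero σ x z ≤ dzero σ z y := by
    apply forall_le_dzero
    intro l₂
    linarith [key l₂]
  linarith

end Stmt11Aux



/-- Frink-type metrization: for a quasi-pseudodistance `D` (vanishing exactly on the diagonal,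
quasi-symmetric and quasi-triangular with constant `C ≥ 1`), for all sufficiently small `ε > 0`
the snowflaked symmetrization `ρ(x,y) = D(x,y)^ε + D(y,x)^ε` is comparable to a genuine
metric `d₀`: `A⁻¹ ρ ≤ d₀ ≤ ρ` for some `A ≥ 1`. -/
theorem stmt11 {X : Type*} (D : X → X → ℝ) (C : ℝ) (hC : 1 ≤ C)
    (hnonneg : ∀ x y, 0 ≤ D x y)
    (heq : ∀ x y, D x y = 0 ↔ x = y)
    (hsym : ∀ x y, D y x ≤ C * D x y)
    (htri : ∀ x y z, D x y ≤ C * (D x z + D z y)) :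
    ∃ ε₀ : ℝ, 0 < ε₀ ∧ ∀ ε : ℝ, 0 < ε → ε ≤ ε₀ →
      ∃ (d₀ : X → X → ℝ) (A : ℝ), 1 ≤ A ∧
        (∀ x y, 0 ≤ d₀ x y) ∧
        (∀ x y, d₀ x y = 0 ↔ x = y) ∧
        (∀ x y, d₀ x y = d₀ y x) ∧
        (∀ x y z, d₀ x y ≤ d₀ x z + d₀ z y) ∧
        (∀ x y, A⁻¹ * (D x y ^ ε + D y x ^ ε) ≤ d₀ x y ∧
          d₀ x y ≤ D x y ^ ε + D y x ^ ε) := by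
  classical
  open Stmt11Aux in
  have h2C : (1:ℝ) < 2 * C := by linarith
  have hsqrt2_pos : (0:ℝ) < Real.sqrt 2 := Real.sqrt_pos.mpr (by norm_num)
  have hsq : Real.sqrt 2 * Real.sqrt 2 = 2 := Real.mul_self_sqrt (by norm_num)
  have h1lt : (1:ℝ) < Real.sqrt 2 := by nlinarith [Real.sqrt_nonneg 2]
  refine ⟨Real.logb (2 * C) (Real.sqrt 2), Real.logb_pos h2C h1lt, ?_⟩
  intro ε hε hεle
  have hbase : (2 * C) ^ (Real.logb (2 * C) (Real.sqrt 2)) = Real.sqrt 2 :=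
    Real.rpow_logb (by linarith) (ne_of_gt h2C) hsqrt2_pos
  have hKC : (2 * C) ^ ε ≤ Real.sqrt 2 := by
    calc (2 * C) ^ ε ≤ (2 * C) ^ (Real.logb (2 * C) (Real.sqrt 2)) :=
          (Real.rpow_le_rpow_left_iff h2C).mpr hεle
      _ = Real.sqrt 2 := hbase
  set σ : X → X → ℝ := fun a b => max (D a b ^ ε) (D b a ^ ε) with hσ
  have hnn : ∀ a b, 0 ≤ σ a b := fun a b =>
    le_max_of_le_left (Real.rpow_nonneg (hnonneg a b) ε)
  have hσ0 : ∀ a, σ a a = 0 := by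
    intro a
    have hDaa : D a a = 0 := (heq a a).mpr rfl
    simp [hσ, hDaa, Real.zero_rpow (ne_of_gt hε)]
  have hσsymm : ∀ a b, σ a b = σ b a := fun a b => max_comm _ _
  have helper : ∀ a b c, D a c ^ ε ≤ Real.sqrt 2 * max (σ a b) (σ b c) := by
    intro a b c
    have h1 : D a c ≤ 2 * C * max (D a b) (D b c) := by
      have ht := htri a c b
      have hm1 := le_max_left (D a b) (D b c)
      have hm2 := le_max_right (D a b) (D b c)
      nlinarith
    have h2 : D a c ^ ε ≤ (2 * C * max (D a b) (D b c)) ^ ε :=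
      Real.rpow_le_rpow (hnonneg a c) h1 hε.le
    rw [Real.mul_rpow (by linarith) (le_max_of_le_left (hnonneg a b))] at h2
    have h3 : max (D a b) (D b c) ^ ε ≤ max (σ a b) (σ b c) := by
      rcases max_cases (D a b) (D b c) with ⟨hm, _⟩ | ⟨hm, _⟩
      · rw [hm]; exact le_max_of_le_left (le_max_left _ _)
      · rw [hm]; exact le_max_of_le_right (le_max_left _ _)
    calc D a c ^ ε ≤ (2 * C) ^ ε * max (D a b) (D b c) ^ ε := h2
      _ ≤ Real.sqrt 2 * max (σ a b) (σ b c) :=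
          mul_le_mul hKC h3 (Real.rpow_nonneg (le_max_of_le_left (hnonneg a b)) ε)
            hsqrt2_pos.le
  have hK : ∀ x y z, σ x z ≤ Real.sqrt 2 * max (σ x y) (σ y z) := by
    intro x y z
    apply max_le
    · exact helper x y z
    · have h := helper z y x
      rw [hσsymm z y, hσsymm y x, max_comm (σ y z) (σ x y)] at h
      exact h
  refine ⟨dzero σ, 4, by norm_num, fun x y => dzero_nonneg σ hnn x y, ?_, ?_, ?_, ?_⟩
  · intro x y
    constructor
    · intro h
      by_contra hxy
      have hD : 0 < D x y :=
        lt_of_le_of_ne (hnonneg x y) (Ne.symm fun h' => hxy ((heq x y).mp h'))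
      have hσpos : 0 < σ x y :=
        lt_of_lt_of_le (Real.rpow_pos_of_pos hD ε) (le_max_left _ _)
      have h2d := le_dzero σ hnn hσ0 hK x y
      rw [h] at h2d
      linarith
    · rintro rfl
      have h1 := dzero_le σ hnn x x
      have h2 := dzero_nonneg σ hnn x x
      rw [hσ0 x] at h1
      linarith
  · intro x y
    exact dzero_symm σ hσsymm x y
  · intro x y z
    exact dzero_triangle σ hnn x z y
  · intro x y
    have hle := dzero_le σ hnn x y
    have hge := le_dzero σ hnn hσ0 hK x y
    have hma := le_max_left (D x y ^ ε) (D y x ^ ε)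
    have hmb := le_max_right (D x y ^ ε) (D y x ^ ε)
    have hna := Real.rpow_nonneg (hnonneg x y) ε
    have hnb := Real.rpow_nonneg (hnonneg y x) ε
    have hσle : σ x y ≤ D x y ^ ε + D y x ^ ε := max_le (by linarith) (by linarith)
    constructor
    · have : D x y ^ ε + D y x ^ ε ≤ 4 * dzero σ x y := by linarith
      linarith
    · linarith
end

section
/- Let X be a set, h : X → (0,∞) bounded above by M, and D a quasi-pseudodistance on X with constant C₁. Define g(x,y) = 2·log((D(x,y) + max(h(x),h(y)))/√(h(x)h(y))). Then g is symmetric up to an additive constant: |g(x,y) − g(y,x)| ≤ 2·log C₁, and g(x,y) ≥ |log(h(x)/h(y))| for all x,y. -/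
/-- For `g(x,y) = 2 log((D(x,y) + max(h x, h y))/√(h x · h y))`, with `D` a quasi-pseudodistance
with constant `C₁` and `h : X → (0,∞)` bounded above by `M`: `g` is symmetric up to the additive
constant `2 log C₁`, and `g(x,y) ≥ |log(h x / h y)|`. -/
theorem stmt15 {X : Type*} (D : X → X → ℝ) (h : X → ℝ) (C₁ M : ℝ) (hC₁ : 1 ≤ C₁)
    (hnonneg : ∀ x y, 0 ≤ D x y)
    (hsym : ∀ x y, D y x ≤ C₁ * D x y)
    (htri : ∀ x y z, D x y ≤ C₁ * (D x z + D z y))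
    (hh : ∀ x, 0 < h x) (hM : ∀ x, h x ≤ M) :
    ∀ x y : X,
      |2 * Real.log ((D x y + max (h x) (h y)) / Real.sqrt (h x * h y)) -
          2 * Real.log ((D y x + max (h y) (h x)) / Real.sqrt (h y * h x))| ≤
        2 * Real.log C₁ ∧
      |Real.log (h x / h y)| ≤
        2 * Real.log ((D x y + max (h x) (h y)) / Real.sqrt (h x * h y)) := by
  have hC₁pos : (0:ℝ) < C₁ := lt_of_lt_of_le one_pos hC₁
  have hApos : ∀ a b : X, 0 < D a b + max (h a) (h b) := fun a b =>
    add_pos_of_nonneg_of_pos (hnonneg a b) ((hh a).trans_le (le_max_left _ _))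
  have hspos : ∀ a b : X, 0 < Real.sqrt (h a * h b) := fun a b =>
    Real.sqrt_pos.2 (mul_pos (hh a) (hh b))
  have key : ∀ a b : X,
      2 * Real.log ((D a b + max (h a) (h b)) / Real.sqrt (h a * h b)) -
        2 * Real.log ((D b a + max (h b) (h a)) / Real.sqrt (h b * h a)) ≤
      2 * Real.log C₁ := by
    intro a b
    rw [max_comm (h b) (h a), mul_comm (h b) (h a),
      Real.log_div (hApos a b).ne' (hspos a b).ne',
      Real.log_div (ne_of_gt (add_pos_of_nonneg_of_pos (hnonneg b a)
        ((hh a).trans_le (le_max_left _ _)))) (hspos a b).ne']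
    have hle : D a b + max (h a) (h b) ≤ C₁ * (D b a + max (h a) (h b)) := by
      rw [mul_add]
      gcongr
      · exact hsym b a
      · exact le_mul_of_one_le_left (le_of_lt ((hh a).trans_le (le_max_left _ _))) hC₁
    have hlog : Real.log (D a b + max (h a) (h b)) ≤
        Real.log C₁ + Real.log (D b a + max (h a) (h b)) := by
      rw [← Real.log_mul hC₁pos.ne' (ne_of_gt (add_pos_of_nonneg_of_pos (hnonneg b a)
        ((hh a).trans_le (le_max_left _ _))))]
      exact Real.log_le_log (hApos a b) hle
    nlinarith [hlog]
  intro x y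
  refine ⟨abs_sub_le_iff.2 ⟨key x y, ?_⟩, ?_⟩
  · have := key y x
    linarith
  · -- second part
    have hsq : Real.sqrt (h x * h y) * Real.sqrt (h x * h y) = h x * h y :=
      Real.mul_self_sqrt (le_of_lt (mul_pos (hh x) (hh y)))
    have main : ∀ (a b : X) (d : ℝ), 0 ≤ d → h b ≤ h a →
        Real.log (h a / h b) ≤
          2 * Real.log ((d + max (h a) (h b)) / Real.sqrt (h a * h b)) := by
      intro a b d hd hab
      have ha := hh a
      have hb := hh b
      have hs := hspos a b
      have hsq' : Real.sqrt (h a * h b) * Real.sqrt (h a * h b) = h a * h b :=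
        Real.mul_self_sqrt (le_of_lt (mul_pos (hh a) (hh b)))
      have h1 : h a / h b =
          (h a / Real.sqrt (h a * h b)) * (h a / Real.sqrt (h a * h b)) := by
        rw [div_mul_div_comm, hsq']
        rw [mul_div_mul_left _ _ ha.ne']
      have hda : 0 < d + max (h a) (h b) :=
        add_pos_of_nonneg_of_pos hd (ha.trans_le (le_max_left _ _))
      rw [h1, Real.log_mul (div_pos ha hs).ne' (div_pos ha hs).ne', two_mul]
      have h2 : Real.log (h a / Real.sqrt (h a * h b)) ≤
          Real.log ((d + max (h a) (h b)) / Real.sqrt (h a * h b)) := by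
        apply Real.log_le_log (div_pos ha hs)
        apply div_le_div_of_nonneg_right _ (hspos a b).le
        rw [max_eq_left hab]
        linarith
      linarith
    rcases le_total (h y) (h x) with hxy | hxy
    · rw [abs_of_nonneg (Real.log_nonneg ((one_le_div (hh y)).2 hxy))]
      exact main x y (D x y) (hnonneg x y) hxy
    · rw [abs_of_nonpos (Real.log_nonpos (div_pos (hh x) (hh y)).le
        ((div_le_one (hh y)).2 hxy)), ← Real.log_inv, inv_div]
      have := main y x (D x y) (hnonneg x y) hxy
      rw [max_comm (h y) (h x), mul_comm (h y) (h x)] at this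
      exact this
end
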